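/- arXiv:1104.4099 — 3 statements merged into one kernel-verified Lean document; each statement's English description precedes it below -/
import Mathlib

section
/- Let n ≥ 3 and let τ ∈ S_n. Then Σ_{σ ∈ S_n} des(τσ)·des(σ⁻¹) = Σ_{σ ∈ S_n} des(σ)·des(σ⁻¹) − des(τ)·(n-1)!. -/
open Finset Equiv

/-- The number of descents of a permutation of `Fin n`. -/
def desCount {n : ℕ} (σ : Equiv.Perm (Fin n)) : ℕ :=
  (Finset.univ.filter
    (fun p : Fin n × Fin n => (p.2 : ℕ) = (p.1 : ℕ) + 1 ∧ σ p.2 < σ p.1)).card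

lemma card_fix_fix {n : ℕ} (x y : Fin n) (hxy : x ≠ y) :
    (Finset.univ.filter (fun ρ : Perm (Fin n) => ρ x = x ∧ ρ y = y)).card = (n-2).factorial := by
  have h1 : (Finset.univ.filter (fun ρ : Perm (Fin n) => ρ x = x ∧ ρ y = y)).card
      = Fintype.card {ρ : Perm (Fin n) // ∀ a, ¬(a ≠ x ∧ a ≠ y) → ρ a = a} := by
    rw [Fintype.card_subtype]
    congr 1
    apply Finset.filter_congr
    intro ρ _
    constructor
    · rintro ⟨h1, h2⟩ a ha
      simp only [not_and_or, not_not] at ha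
      rcases ha with rfl | rfl <;> assumption
    · intro h
      exact ⟨h x (by simp), h y (by simp)⟩
  rw [h1, ← Fintype.card_congr (Equiv.Perm.subtypeEquivSubtypePerm (fun a => a ≠ x ∧ a ≠ y)),
    Fintype.card_perm, Fintype.card_subtype]
  congr 2
  have : Finset.univ.filter (fun a : Fin n => a ≠ x ∧ a ≠ y) = Finset.univ \ {x, y} := by
    ext a; simp [and_comm]
  rw [this, Finset.card_sdiff_of_subset (by simp), Finset.card_univ, Fintype.card_fin,
    Finset.card_insert_of_notMem (by simp [hxy]), Finset.card_singleton]

lemma exists_map_two {n : ℕ} (x y u v : Fin n) (hxy : x ≠ y) (huv : u ≠ v) :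
    ∃ π : Perm (Fin n), π x = u ∧ π y = v := by
  refine ⟨Equiv.swap ((Equiv.swap x u) y) v * Equiv.swap x u, ?_, ?_⟩
  · simp only [Perm.mul_apply, Equiv.swap_apply_left]
    apply Equiv.swap_apply_of_ne_of_ne _ huv
    intro h
    exact hxy ((Equiv.swap x u).injective ((Equiv.swap_apply_left x u).trans h))
  · simp only [Perm.mul_apply, Equiv.swap_apply_left]

lemma card_fix_two {n : ℕ} (x y u v : Fin n) (hxy : x ≠ y) (huv : u ≠ v) :
    (Finset.univ.filter (fun ρ : Perm (Fin n) => ρ x = u ∧ ρ y = v)).card = (n-2).factorial := by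
  obtain ⟨π, hπx, hπy⟩ := exists_map_two x y u v hxy huv
  rw [← card_fix_fix x y hxy]
  apply Finset.card_nbij' (fun ρ => π⁻¹ * ρ) (fun ρ => π * ρ)
  · intro ρ hρ
    simp only [Finset.mem_coe, Finset.mem_filter, Finset.mem_univ, true_and, Perm.mul_apply] at hρ ⊢
    rw [hρ.1, hρ.2, ← hπx, ← hπy, Perm.coe_inv, Equiv.symm_apply_apply, Equiv.symm_apply_apply]
    exact ⟨rfl, rfl⟩
  · intro ρ hρ
    simp only [Finset.mem_coe, Finset.mem_filter, Finset.mem_univ, true_and, Perm.mul_apply] at hρ ⊢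
    rw [hρ.1, hρ.2, hπx, hπy]
    exact ⟨rfl, rfl⟩
  · intro ρ _; simp [mul_assoc]
  · intro ρ _; simp [mul_assoc]

set_option maxHeartbeats 1000000 in

lemma g_add {n : ℕ} (p1 p2 u v : Fin n) (hp : (p2:ℕ) = (p1:ℕ)+1) (huv : u < v)
    (ρ : Perm (Fin n)) :
    ((if ρ⁻¹ v < ρ⁻¹ u then (1:ℤ) else 0) *
      ((if ρ p2 < ρ p1 then (1:ℤ) else 0)
        - (if Equiv.swap u v (ρ p2) < Equiv.swap u v (ρ p1) then (1:ℤ) else 0)))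
    + ((if (ρ * Equiv.swap p1 p2)⁻¹ v < (ρ * Equiv.swap p1 p2)⁻¹ u then (1:ℤ) else 0) *
      ((if (ρ * Equiv.swap p1 p2) p2 < (ρ * Equiv.swap p1 p2) p1 then (1:ℤ) else 0)
        - (if Equiv.swap u v ((ρ * Equiv.swap p1 p2) p2)
              < Equiv.swap u v ((ρ * Equiv.swap p1 p2) p1) then (1:ℤ) else 0)))
    = if (ρ p1 = u ∧ ρ p2 = v) ∨ (ρ p1 = v ∧ ρ p2 = u) then 1 else 0 := by
  have hpne : p1 ≠ p2 := by intro h; rw [h] at hp; omega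
  have hρ'inv : ∀ z, (ρ * Equiv.swap p1 p2)⁻¹ z = Equiv.swap p1 p2 (ρ⁻¹ z) := by
    intro z; rw [mul_inv_rev, Equiv.swap_inv]; rfl
  have h1 : (ρ * Equiv.swap p1 p2) p1 = ρ p2 := by
    simp [Perm.mul_apply, Equiv.swap_apply_left]
  have h2 : (ρ * Equiv.swap p1 p2) p2 = ρ p1 := by
    simp [Perm.mul_apply, Equiv.swap_apply_right]
  have huvne : u ≠ v := ne_of_lt huv
  have hab : ρ p1 ≠ ρ p2 := fun h => hpne (ρ.injective h)
  rw [h1, h2, hρ'inv, hρ'inv]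
  have hinv : ∀ z w : Fin n, ρ w = z → ρ⁻¹ z = w := fun z w h => by rw [← h]; simp
  have hinvne : ∀ z w : Fin n, ρ w ≠ z → ρ⁻¹ z ≠ w := by
    intro z w h hc; exact h (by rw [← hc]; simp)
  simp only [ne_eq, Fin.ext_iff] at huvne hab
  rw [Fin.lt_def] at huv
  by_cases hau : ρ p1 = u
  · by_cases hbv : ρ p2 = v
    · have hx : ρ⁻¹ u = p1 := hinv _ _ hau
      have hy : ρ⁻¹ v = p2 := hinv _ _ hbv
      rw [hx, hy, hau, hbv]
      simp only [Equiv.swap_apply_left, Equiv.swap_apply_right]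
      simp only [Fin.lt_def, Fin.ext_iff, true_and, and_true, true_or, or_true, if_true]
      split_ifs <;> omega
    · have hbu : ρ p2 ≠ u := by rw [← hau]; exact fun h => hab (congrArg Fin.val h.symm)
      have hx : ρ⁻¹ u = p1 := hinv _ _ hau
      have hy1 : ρ⁻¹ v ≠ p1 := hinvne _ _ (by rw [hau]; exact fun h => huvne (congrArg Fin.val h))
      have hy2 : ρ⁻¹ v ≠ p2 := hinvne _ _ hbv
      rw [hx, hau]
      simp only [Equiv.swap_apply_left, Equiv.swap_apply_of_ne_of_ne hy1 hy2,
        Equiv.swap_apply_of_ne_of_ne hbu hbv]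
      simp only [ne_eq, Fin.ext_iff] at hbu hbv hy1 hy2
      simp only [Fin.lt_def, Fin.ext_iff, true_and, and_true, true_or, or_true, if_true]
      split_ifs <;> omega
  · by_cases hav : ρ p1 = v
    · by_cases hbu : ρ p2 = u
      · have hx : ρ⁻¹ u = p2 := hinv _ _ hbu
        have hy : ρ⁻¹ v = p1 := hinv _ _ hav
        rw [hx, hy, hav, hbu]
        simp only [Equiv.swap_apply_left, Equiv.swap_apply_right]
        simp only [Fin.lt_def, Fin.ext_iff, true_and, and_true, true_or, or_true, if_true]
        split_ifs <;> omega
      · have hbv : ρ p2 ≠ v := by rw [← hav]; exact fun h => hab (congrArg Fin.val h.symm)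
        have hy : ρ⁻¹ v = p1 := hinv _ _ hav
        have hx1 : ρ⁻¹ u ≠ p1 := hinvne _ _ (by rw [hav]; exact fun h => huvne (congrArg Fin.val h.symm))
        have hx2 : ρ⁻¹ u ≠ p2 := hinvne _ _ hbu
        rw [hy, hav]
        simp only [Equiv.swap_apply_left, Equiv.swap_apply_right,
          Equiv.swap_apply_of_ne_of_ne hx1 hx2, Equiv.swap_apply_of_ne_of_ne hbu hbv]
        simp only [ne_eq, Fin.ext_iff] at hbu hbv hx1 hx2
        simp only [Fin.lt_def, Fin.ext_iff, true_and, and_true, true_or, or_true, if_true]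
        split_ifs <;> omega
    · have hx1 : ρ⁻¹ u ≠ p1 := hinvne _ _ hau
      have hy1 : ρ⁻¹ v ≠ p1 := hinvne _ _ hav
      by_cases hbu : ρ p2 = u
      · have hbv : ρ p2 ≠ v := by rw [hbu]; exact fun h => huvne (congrArg Fin.val h)
        have hx : ρ⁻¹ u = p2 := hinv _ _ hbu
        have hy2 : ρ⁻¹ v ≠ p2 := hinvne _ _ hbv
        rw [hx, hbu]
        simp only [Equiv.swap_apply_left, Equiv.swap_apply_right,
          Equiv.swap_apply_of_ne_of_ne hy1 hy2, Equiv.swap_apply_of_ne_of_ne hau hav]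
        simp only [ne_eq, Fin.ext_iff] at hau hav hy1 hy2
        simp only [Fin.lt_def, Fin.ext_iff, true_and, and_true, true_or, or_true, if_true]
        split_ifs <;> omega
      · by_cases hbv : ρ p2 = v
        · have hy : ρ⁻¹ v = p2 := hinv _ _ hbv
          have hx2 : ρ⁻¹ u ≠ p2 := hinvne _ _ hbu
          rw [hy, hbv]
          simp only [Equiv.swap_apply_left, Equiv.swap_apply_right,
            Equiv.swap_apply_of_ne_of_ne hx1 hx2, Equiv.swap_apply_of_ne_of_ne hau hav]
          simp only [ne_eq, Fin.ext_iff] at hau hav hx1 hx2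
          simp only [Fin.lt_def, Fin.ext_iff, true_and, and_true, true_or, or_true, if_true]
          split_ifs <;> omega
        · simp only [Equiv.swap_apply_of_ne_of_ne hau hav,
            Equiv.swap_apply_of_ne_of_ne hbu hbv]
          simp only [ne_eq, Fin.ext_iff] at hau hav hbu hbv
          simp only [Fin.lt_def, Fin.ext_iff, true_and, and_true, true_or, or_true, if_true]
          split_ifs <;> omega


lemma sum_reindex_right {n : ℕ} (s : Perm (Fin n)) (g : Perm (Fin n) → ℤ) :
    ∑ ρ : Perm (Fin n), g (ρ * s) = ∑ ρ : Perm (Fin n), g ρ :=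
  Fintype.sum_equiv (Equiv.mulRight s) _ _ (fun _ => rfl)

lemma sum_reindex_left {n : ℕ} (s : Perm (Fin n)) (g : Perm (Fin n) → ℤ) :
    ∑ ρ : Perm (Fin n), g (s * ρ) = ∑ ρ : Perm (Fin n), g ρ :=
  Fintype.sum_equiv (Equiv.mulLeft s) _ _ (fun _ => rfl)

lemma LD {n : ℕ} (p1 p2 u v : Fin n) (hp : (p2:ℕ) = (p1:ℕ)+1) (huv : u < v) :
    (∑ ρ : Perm (Fin n), if ρ p2 < ρ p1 ∧ ρ⁻¹ v < ρ⁻¹ u then (1:ℤ) else 0)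
      - (∑ ρ : Perm (Fin n), if ρ p2 < ρ p1 ∧ ρ⁻¹ u < ρ⁻¹ v then (1:ℤ) else 0)
    = ((n-2).factorial : ℤ) := by
  have hpne : p1 ≠ p2 := by intro h; rw [h] at hp; omega
  have h2 : (∑ ρ : Perm (Fin n), if ρ p2 < ρ p1 ∧ ρ⁻¹ u < ρ⁻¹ v then (1:ℤ) else 0)
      = ∑ ρ : Perm (Fin n),
          if Equiv.swap u v (ρ p2) < Equiv.swap u v (ρ p1) ∧ ρ⁻¹ v < ρ⁻¹ u then (1:ℤ) else 0 := by
    rw [← sum_reindex_left (Equiv.swap u v)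
      (fun ρ => if ρ p2 < ρ p1 ∧ ρ⁻¹ u < ρ⁻¹ v then (1:ℤ) else 0)]
    apply Finset.sum_congr rfl
    intro ρ _
    have hi : ∀ z, (Equiv.swap u v * ρ)⁻¹ z = ρ⁻¹ (Equiv.swap u v z) := by
      intro z; rw [mul_inv_rev, Equiv.swap_inv]; rfl
    simp only [Perm.mul_apply, hi, Equiv.swap_apply_left, Equiv.swap_apply_right]
  rw [h2]
  have key : ∀ ρ : Perm (Fin n),
      (if ρ p2 < ρ p1 ∧ ρ⁻¹ v < ρ⁻¹ u then (1:ℤ) else 0)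
        - (if Equiv.swap u v (ρ p2) < Equiv.swap u v (ρ p1) ∧ ρ⁻¹ v < ρ⁻¹ u then (1:ℤ) else 0)
      = (if ρ⁻¹ v < ρ⁻¹ u then (1:ℤ) else 0) *
          ((if ρ p2 < ρ p1 then (1:ℤ) else 0)
            - (if Equiv.swap u v (ρ p2) < Equiv.swap u v (ρ p1) then (1:ℤ) else 0)) := by
    intro ρ; split_ifs <;> simp_all <;> order
  rw [← Finset.sum_sub_distrib]
  simp only [key]
  set g : Perm (Fin n) → ℤ := fun ρ =>
    (if ρ⁻¹ v < ρ⁻¹ u then (1:ℤ) else 0) *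
      ((if ρ p2 < ρ p1 then (1:ℤ) else 0)
        - (if Equiv.swap u v (ρ p2) < Equiv.swap u v (ρ p1) then (1:ℤ) else 0)) with hg
  have hdouble : (∑ ρ : Perm (Fin n), g ρ) + (∑ ρ : Perm (Fin n), g ρ)
      = ∑ ρ : Perm (Fin n),
          if (ρ p1 = u ∧ ρ p2 = v) ∨ (ρ p1 = v ∧ ρ p2 = u) then (1:ℤ) else 0 := by
    nth_rewrite 2 [← sum_reindex_right (Equiv.swap p1 p2) g]
    rw [← Finset.sum_add_distrib]
    apply Finset.sum_congr rfl
    intro ρ _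
    exact g_add p1 p2 u v hp huv ρ
  have hcard : (∑ ρ : Perm (Fin n),
      if (ρ p1 = u ∧ ρ p2 = v) ∨ (ρ p1 = v ∧ ρ p2 = u) then (1:ℤ) else 0)
      = 2 * ((n-2).factorial : ℤ) := by
    rw [Finset.sum_boole]
    rw [Finset.filter_or, Finset.card_union_of_disjoint]
    · rw [card_fix_two p1 p2 u v hpne (ne_of_lt huv), card_fix_two p1 p2 v u hpne (ne_of_lt huv).symm]
      push_cast; ring
    · rw [Finset.disjoint_filter]
      rintro ρ _ ⟨h1, h2⟩ ⟨h3, h4⟩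
      exact (ne_of_lt huv) (h1 ▸ h3.symm ▸ rfl)
  linarith [hdouble, hcard]

lemma LA {n : ℕ} (p1 p2 u v : Fin n) (huv : u ≠ v) :
    (∑ ρ : Perm (Fin n), if ρ p2 < ρ p1 ∧ ρ⁻¹ v < ρ⁻¹ u then (1:ℤ) else 0)
      + (∑ ρ : Perm (Fin n), if ρ p2 < ρ p1 ∧ ρ⁻¹ u < ρ⁻¹ v then (1:ℤ) else 0)
    = ∑ ρ : Perm (Fin n), if ρ p2 < ρ p1 then (1:ℤ) else 0 := by
  rw [← Finset.sum_add_distrib]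
  apply Finset.sum_congr rfl
  intro ρ _
  have hne : ρ⁻¹ v ≠ ρ⁻¹ u := fun h => huv (ρ⁻¹.injective h).symm
  by_cases hA : ρ p2 < ρ p1 <;> rcases lt_or_gt_of_ne hne with h | h <;>
    simp only [hA, h, lt_asymm h, true_and, false_and, ↓reduceIte, add_zero, zero_add]

lemma M_tau {n : ℕ} (p1 p2 q1 q2 : Fin n) (hp : (p2:ℕ) = (p1:ℕ)+1)
    (hq : (q2:ℕ) = (q1:ℕ)+1) (τ : Perm (Fin n)) :
    2 * (∑ ρ : Perm (Fin n), if ρ p2 < ρ p1 ∧ ρ⁻¹ (τ q2) < ρ⁻¹ (τ q1) then (1:ℤ) else 0)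
    = 2 * (∑ ρ : Perm (Fin n), if ρ p2 < ρ p1 ∧ ρ⁻¹ q2 < ρ⁻¹ q1 then (1:ℤ) else 0)
      - 2 * ((n-2).factorial : ℤ) * (if τ q2 < τ q1 then 1 else 0) := by
  have hq12 : q1 < q2 := by rw [Fin.lt_def]; omega
  have hqne : τ q1 ≠ τ q2 := fun h => (ne_of_lt hq12) (τ.injective h)
  have base := LD p1 p2 q1 q2 hp hq12
  have baseA := LA p1 p2 q1 q2 (ne_of_lt hq12)
  rcases lt_or_gt_of_ne hqne with h | h
  · have d := LD p1 p2 (τ q1) (τ q2) hp h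
    have a := LA p1 p2 (τ q1) (τ q2) (ne_of_lt h)
    rw [if_neg (asymm h)]
    linarith
  · have d := LD p1 p2 (τ q2) (τ q1) hp h
    have a := LA p1 p2 (τ q2) (τ q1) (ne_of_lt h)
    rw [if_pos h]
    linarith

lemma card_adj (n : ℕ) :
    (Finset.univ.filter fun p : Fin n × Fin n => (p.2:ℕ) = (p.1:ℕ)+1).card = n - 1 := by
  set f : Fin (n-1) → Fin n × Fin n := fun m =>
    ((⟨m.1, lt_of_lt_of_le m.2 (Nat.sub_le n 1)⟩ : Fin n),
     (⟨m.1+1, by have := m.2; omega⟩ : Fin n)) with hf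
  have hinj : Function.Injective f := by
    intro a b hab
    rw [hf, Prod.ext_iff] at hab
    exact Fin.ext (by simpa [Fin.ext_iff] using hab.1)
  have himg : (Finset.univ.filter fun p : Fin n × Fin n => (p.2:ℕ) = (p.1:ℕ)+1)
      = Finset.image f Finset.univ := by
    ext ⟨x, y⟩
    simp only [Finset.mem_filter, Finset.mem_univ, true_and, Finset.mem_image]
    constructor
    · intro h
      refine ⟨⟨x.1, by have := y.2; omega⟩, ?_⟩
      rw [hf]
      dsimp only
      rw [Prod.ext_iff]
      exact ⟨Fin.ext rfl, Fin.ext h.symm⟩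
    · rintro ⟨m, hm⟩
      have h1 : x = (f m).1 := by rw [hm]
      have h2 : y = (f m).2 := by rw [hm]
      rw [h1, h2, hf]
  rw [himg, Finset.card_image_of_injective _ hinj, Finset.card_univ, Fintype.card_fin]

lemma desCount_eq {n : ℕ} (σ : Perm (Fin n)) :
    (desCount σ : ℤ)
      = ∑ p ∈ (Finset.univ.filter fun p : Fin n × Fin n => (p.2:ℕ) = (p.1:ℕ)+1),
          (if σ p.2 < σ p.1 then (1:ℤ) else 0) := by
  rw [desCount, Finset.sum_filter, Finset.card_filter]
  push_cast
  apply Finset.sum_congr rfl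
  intro p _
  split_ifs <;> simp_all
theorem stmt_17 (n : ℕ) (hn : 3 ≤ n) (τ : Equiv.Perm (Fin n)) :
    ∑ σ : Equiv.Perm (Fin n), (desCount (τ * σ) : ℤ) * (desCount σ⁻¹ : ℤ) =
      (∑ σ : Equiv.Perm (Fin n), (desCount σ : ℤ) * (desCount σ⁻¹ : ℤ)) -
        (desCount τ : ℤ) * ((n - 1).factorial : ℤ) := by
  set P := (Finset.univ.filter fun p : Fin n × Fin n => (p.2:ℕ) = (p.1:ℕ)+1) with hP
  have expand : ∀ τ' : Perm (Fin n),
      (∑ σ : Perm (Fin n), (desCount (τ' * σ) : ℤ) * (desCount σ⁻¹ : ℤ))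
      = ∑ p ∈ P, ∑ q ∈ P, ∑ ρ : Perm (Fin n),
          (if ρ p.2 < ρ p.1 ∧ ρ⁻¹ (τ' q.2) < ρ⁻¹ (τ' q.1) then (1:ℤ) else 0) := by
    intro τ'
    have e1 : ∀ σ : Perm (Fin n), (desCount (τ' * σ) : ℤ) * (desCount σ⁻¹ : ℤ)
        = ∑ p ∈ P, ∑ q ∈ P, (if (τ' * σ) p.2 < (τ' * σ) p.1 then (1:ℤ) else 0)
            * (if σ⁻¹ q.2 < σ⁻¹ q.1 then (1:ℤ) else 0) := by
      intro σ
      rw [desCount_eq, desCount_eq, Finset.sum_mul_sum]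
    simp only [e1]
    rw [Finset.sum_comm]
    apply Finset.sum_congr rfl
    intro p _
    rw [Finset.sum_comm]
    apply Finset.sum_congr rfl
    intro q _
    rw [← sum_reindex_left τ'
      (fun ρ => if ρ p.2 < ρ p.1 ∧ ρ⁻¹ (τ' q.2) < ρ⁻¹ (τ' q.1) then (1:ℤ) else 0)]
    apply Finset.sum_congr rfl
    intro σ _
    have hi : ∀ z, (τ' * σ)⁻¹ (τ' z) = σ⁻¹ z := by
      intro z; rw [mul_inv_rev]; simp
    simp only [hi]
    by_cases hA : (τ' * σ) p.2 < (τ' * σ) p.1 <;>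
      by_cases hB : σ⁻¹ q.2 < σ⁻¹ q.1 <;> simp only [hA, hB, and_self, and_true, and_false, true_and, false_and, ↓reduceIte, mul_one, mul_zero, zero_mul]
  have exp1 : (∑ σ : Perm (Fin n), (desCount σ : ℤ) * (desCount σ⁻¹ : ℤ))
      = ∑ p ∈ P, ∑ q ∈ P, ∑ ρ : Perm (Fin n),
          (if ρ p.2 < ρ p.1 ∧ ρ⁻¹ q.2 < ρ⁻¹ q.1 then (1:ℤ) else 0) := by
    have h := expand 1
    simp only [one_mul, Perm.one_apply] at h
    exact h
  have hfac : ((n-1).factorial : ℤ) = ((n:ℤ) - 1) * ((n-2).factorial : ℤ) := by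
    have h1 : n - 1 = (n-2)+1 := by omega
    rw [h1, Nat.factorial_succ]
    push_cast
    have : ((n:ℤ) - 2) + 1 = (n:ℤ) - 1 := by ring
    rw [show ((n-2:ℕ):ℤ) = (n:ℤ) - 2 by omega]
    ring
  have hcardP : (P.card : ℤ) = (n:ℤ) - 1 := by
    rw [hP, card_adj]
    omega
  have main2 : 2 * (∑ σ : Perm (Fin n), (desCount (τ * σ) : ℤ) * (desCount σ⁻¹ : ℤ))
      = 2 * (∑ σ : Perm (Fin n), (desCount σ : ℤ) * (desCount σ⁻¹ : ℤ))
        - 2 * (desCount τ : ℤ) * ((n-1).factorial : ℤ) := by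
    rw [expand τ, exp1]
    rw [Finset.mul_sum, Finset.mul_sum]
    have step : ∀ p ∈ P, (2 * ∑ q ∈ P, ∑ ρ : Perm (Fin n),
        (if ρ p.2 < ρ p.1 ∧ ρ⁻¹ (τ q.2) < ρ⁻¹ (τ q.1) then (1:ℤ) else 0))
        = (2 * ∑ q ∈ P, ∑ ρ : Perm (Fin n),
            (if ρ p.2 < ρ p.1 ∧ ρ⁻¹ q.2 < ρ⁻¹ q.1 then (1:ℤ) else 0))
          - 2 * ((n-2).factorial : ℤ) * (desCount τ : ℤ) := by
      intro p hp
      have hpc : (p.2:ℕ) = (p.1:ℕ)+1 := (Finset.mem_filter.mp hp).2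
      rw [Finset.mul_sum, Finset.mul_sum]
      have := desCount_eq (n := n) τ
      rw [← hP] at this
      rw [this, Finset.mul_sum, ← Finset.sum_sub_distrib]
      apply Finset.sum_congr rfl
      intro q hq
      have hqc : (q.2:ℕ) = (q.1:ℕ)+1 := (Finset.mem_filter.mp hq).2
      have := M_tau p.1 p.2 q.1 q.2 hpc hqc τ
      linarith [this]
    rw [Finset.sum_congr rfl step, Finset.sum_sub_distrib, Finset.sum_const,
      nsmul_eq_mul]
    rw [hfac]
    rw [show ((P.card : ℕ) : ℤ) = (n:ℤ) - 1 from hcardP]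
    ring
  linarith [main2]
end

section
/- Let n ≥ 3, let i be in {1,…,n-1}, and consider the sets A = {σ ∈ S_n : σ⁻¹(i+1) = σ⁻¹(i) + 1} and B = {σ ∈ S_n : σ⁻¹(i) = σ⁻¹(i+1) + 1}. Then Σ_{σ ∈ A} des(σ⁻¹) = Σ_{σ ∈ B} des(σ⁻¹) − (n-2)!·(n-1). -/
open Finset Equiv

-- fibers of σ ↦ σ a all have same card
lemma fiber_eq (n : ℕ) (a b b' : Fin n) :
    (univ.filter (fun σ : Perm (Fin n) => σ a = b)).card =
    (univ.filter (fun σ : Perm (Fin n) => σ a = b')).card := by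
  apply Finset.card_bij (fun σ _ => Equiv.swap b b' * σ)
  · intro σ hσ
    simp only [mem_filter, mem_univ, true_and] at *
    simp [hσ]
  · intro σ hσ σ' hσ' h
    simpa using congrArg (fun ρ => (Equiv.swap b b')⁻¹ * ρ) h
  · intro σ hσ
    refine ⟨Equiv.swap b b' * σ, ?_, ?_⟩
    · simp only [mem_filter, mem_univ, true_and] at *
      simp [hσ, Equiv.swap_apply_right]
    · simp [← mul_assoc]

lemma count1 (n : ℕ) (a b : Fin n) :
    (univ.filter (fun σ : Perm (Fin n) => σ a = b)).card * n = n.factorial := by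
  have h : (univ : Finset (Perm (Fin n))).card =
      ∑ b' : Fin n, (univ.filter (fun σ : Perm (Fin n) => σ a = b')).card := by
    exact Finset.card_eq_sum_card_fiberwise (fun σ _ => mem_univ (σ a))
  have h2 : ∀ b' : Fin n, (univ.filter (fun σ : Perm (Fin n) => σ a = b')).card
      = (univ.filter (fun σ : Perm (Fin n) => σ a = b)).card :=
    fun b' => fiber_eq n a b' b
  rw [Finset.card_univ, Fintype.card_perm, Fintype.card_fin] at h
  rw [Finset.sum_congr rfl (fun b' _ => h2 b'), Finset.sum_const, Finset.card_univ,
    Fintype.card_fin, smul_eq_mul] at h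
  rw [mul_comm]; exact h.symm

lemma fiber2_eq (n : ℕ) (a c b d d' : Fin n) (hac : a ≠ c) (hbd : b ≠ d) (hbd' : b ≠ d') :
    (univ.filter (fun σ : Perm (Fin n) => σ a = b ∧ σ c = d)).card =
    (univ.filter (fun σ : Perm (Fin n) => σ a = b ∧ σ c = d')).card := by
  apply Finset.card_bij (fun σ _ => Equiv.swap d d' * σ)
  · intro σ hσ
    simp only [mem_filter, mem_univ, true_and] at *
    obtain ⟨h1, h2⟩ := hσ
    constructor
    · simp [h1, Equiv.swap_apply_of_ne_of_ne hbd hbd']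
    · simp [h2]
  · intro σ hσ σ' hσ' h
    simpa using congrArg (fun ρ => (Equiv.swap d d')⁻¹ * ρ) h
  · intro σ hσ
    refine ⟨Equiv.swap d d' * σ, ?_, by simp [← mul_assoc]⟩
    simp only [mem_filter, mem_univ, true_and] at *
    obtain ⟨h1, h2⟩ := hσ
    exact ⟨by simp [h1, Equiv.swap_apply_of_ne_of_ne hbd hbd'],
      by simp [h2, Equiv.swap_apply_right]⟩

lemma count2 (n : ℕ) (a c b d : Fin n) (hac : a ≠ c) (hbd : b ≠ d) :
    (univ.filter (fun σ : Perm (Fin n) => σ a = b ∧ σ c = d)).card = (n - 2).factorial := by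
  have hn2 : 2 ≤ n := by
    rcases n with _ | _ | n
    · exact absurd a.2 (by omega)
    · exact absurd (Fin.ext (by omega : (a:ℕ) = c)) hac
    · omega
  have hfib : (univ.filter (fun σ : Perm (Fin n) => σ a = b)).card =
      ∑ d' ∈ univ.erase b,
        ((univ.filter (fun σ : Perm (Fin n) => σ a = b)).filter (fun σ => σ c = d')).card := by
    apply Finset.card_eq_sum_card_fiberwise
    intro σ hσ
    simp only [coe_filter, Set.mem_setOf_eq, mem_filter, mem_univ, true_and] at hσ
    exact Finset.mem_erase.2 ⟨by rw [← hσ]; exact fun h => hac (σ.injective h.symm), mem_univ _⟩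
  have heq : ∀ d' ∈ univ.erase b,
      ((univ.filter (fun σ : Perm (Fin n) => σ a = b)).filter (fun σ => σ c = d')).card =
      (univ.filter (fun σ : Perm (Fin n) => σ a = b ∧ σ c = d)).card := by
    intro d' hd'
    rw [Finset.filter_filter]
    exact (fiber2_eq n a c b d d' hac hbd (Finset.ne_of_mem_erase hd').symm).symm
  rw [Finset.sum_congr rfl heq, Finset.sum_const, smul_eq_mul, Finset.card_erase_of_mem
    (mem_univ b), Finset.card_univ, Fintype.card_fin] at hfib
  have h1 := count1 n a b
  rw [hfib] at h1
  obtain ⟨m, rfl⟩ : ∃ m, n = m + 2 := ⟨n - 2, by omega⟩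
  have hs : m + 2 - 1 = m + 1 := by omega
  have hs2 : m + 2 - 2 = m := by omega
  rw [hs] at h1
  rw [hs2]
  have hfact : (m + 2).factorial = (m + 1) * m.factorial * (m + 2) := by
    rw [Nat.factorial_succ (m+1), Nat.factorial_succ m]; ring
  rw [hfact] at h1
  have h2 := Nat.eq_of_mul_eq_mul_right (show 0 < m + 2 by omega) h1
  exact Nat.eq_of_mul_eq_mul_left (show 0 < m + 1 by omega) h2

lemma countA (n : ℕ) (hn : 1 ≤ n) (i j : Fin n) (hij : (j : ℕ) = (i : ℕ) + 1) :
    (univ.filter (fun σ : Perm (Fin n) =>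
      ((σ⁻¹ j : Fin n) : ℕ) = ((σ⁻¹ i : Fin n) : ℕ) + 1)).card
      = (n - 1) * (n - 2).factorial := by
  have hijne : i ≠ j := fun h => by rw [h] at hij; omega
  rw [Finset.card_eq_sum_card_fiberwise
    (f := fun σ : Perm (Fin n) => σ⁻¹ i) (t := univ) (fun σ _ => mem_univ _)]
  have hterm : ∀ m : Fin n,
      ((univ.filter (fun σ : Perm (Fin n) =>
        ((σ⁻¹ j : Fin n) : ℕ) = ((σ⁻¹ i : Fin n) : ℕ) + 1)).filter
        (fun σ => σ⁻¹ i = m)).card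
      = if (m : ℕ) + 1 < n then (n - 2).factorial else 0 := by
    intro m
    rw [Finset.filter_filter]
    split_ifs with h
    · set m' : Fin n := ⟨(m : ℕ) + 1, h⟩ with hm'
      rw [Finset.filter_congr (q := fun σ : Perm (Fin n) => σ m = i ∧ σ m' = j)
        (fun σ _ => ?_)]
      · exact count2 n m m' i j (fun he => by simp [hm', Fin.ext_iff] at he) hijne
      · constructor
        · rintro ⟨h1, h2⟩
          have hmi : σ m = i := by rw [← h2]; exact σ.apply_symm_apply _
          have hj : σ⁻¹ j = m' := by
            apply Fin.ext; rw [h1, h2]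
          refine ⟨hmi, by rw [← hj]; exact σ.apply_symm_apply _⟩
        · rintro ⟨h1, h2⟩
          have hi' : σ⁻¹ i = m := by rw [← h1]; exact σ.symm_apply_apply _
          have hj' : σ⁻¹ j = m' := by rw [← h2]; exact σ.symm_apply_apply _
          exact ⟨by rw [hi', hj'], hi'⟩
    · rw [Finset.filter_false_of_mem, Finset.card_empty]
      rintro σ - ⟨h1, h2⟩
      have := (σ⁻¹ j).isLt
      rw [h2] at h1
      omega
  rw [Finset.sum_congr rfl (fun m _ => hterm m), ← Finset.sum_filter,
    Finset.sum_const, smul_eq_mul]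
  congr 1
  have hsplit := Finset.card_filter_add_card_filter_not
    (s := (univ : Finset (Fin n))) (p := fun m : Fin n => (m : ℕ) + 1 < n)
  have hneg : (univ.filter (fun m : Fin n => ¬((m : ℕ) + 1 < n))) = {⟨n - 1, by omega⟩} := by
    ext x
    simp only [Finset.mem_filter, mem_univ, true_and, Finset.mem_singleton, Fin.ext_iff]
    have := x.isLt
    omega
  rw [hneg] at hsplit
  simp only [Finset.card_singleton, Finset.card_univ, Fintype.card_fin] at hsplit
  omega

lemma des_aux (n : ℕ) (i j : Fin n) (hij : (j : ℕ) = (i : ℕ) + 1) (τ : Perm (Fin n))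
    (hA : ((τ j : Fin n) : ℕ) = ((τ i : Fin n) : ℕ) + 1) :
    desCount (τ * Equiv.swap i j) = desCount τ + 1 := by
  have hijne : i ≠ j := fun h => by rw [h] at hij; omega
  unfold desCount
  have key : (univ.filter (fun p : Fin n × Fin n =>
        (p.2 : ℕ) = (p.1 : ℕ) + 1 ∧ (τ * Equiv.swap i j) p.2 < (τ * Equiv.swap i j) p.1))
      = insert ((i, j) : Fin n × Fin n)
        (univ.filter (fun p : Fin n × Fin n =>
          (p.2 : ℕ) = (p.1 : ℕ) + 1 ∧ τ p.2 < τ p.1)) := by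
    ext ⟨x, y⟩
    simp only [mem_filter, mem_univ, true_and, mem_insert, Prod.mk.injEq,
      Equiv.Perm.mul_apply, Fin.lt_def]
    by_cases hc : (y : ℕ) = (x : ℕ) + 1
    · by_cases hx : x = i
      · have hy : y = j := Fin.ext (by omega)
        subst hx; subst hy
        rw [Equiv.swap_apply_left, Equiv.swap_apply_right]
        simp only [hc, true_and]
        constructor
        · intro _; exact Or.inl (by simp)
        · intro _; omega
      · by_cases hx2 : x = j
        · subst hx2
          have hyi : y ≠ i := fun h => by rw [h] at hc; omega
          have hyj : y ≠ x := fun h => by rw [h] at hc; omega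
          rw [Equiv.swap_apply_of_ne_of_ne hyi hyj, Equiv.swap_apply_right]
          have h1 : (τ y : ℕ) ≠ (τ i : ℕ) :=
            fun h => hyi (τ.injective (Fin.ext h))
          have h2 : (τ y : ℕ) ≠ (τ x : ℕ) :=
            fun h => hyj (τ.injective (Fin.ext h))
          simp only [hc, true_and]
          constructor
          · intro hlt; right; omega
          · rintro (⟨h, -⟩ | hlt)
            · exact absurd h hx
            · omega
        · by_cases hy : y = i
          · subst hy
            rw [Equiv.swap_apply_left, Equiv.swap_apply_of_ne_of_ne hx hx2]
            have h1 : (τ x : ℕ) ≠ (τ y : ℕ) :=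
              fun h => hx (τ.injective (Fin.ext h))
            have h2 : (τ x : ℕ) ≠ (τ j : ℕ) :=
              fun h => hx2 (τ.injective (Fin.ext h))
            simp only [hc, true_and]
            constructor
            · intro hlt; right; omega
            · rintro (⟨h, -⟩ | hlt)
              · exact absurd h hx
              · omega
          · have hy2 : y ≠ j := fun h => hx (Fin.ext (by rw [h] at hc; omega))
            rw [Equiv.swap_apply_of_ne_of_ne hy hy2, Equiv.swap_apply_of_ne_of_ne hx hx2]
            simp [hx, hc]
    · have hne : ¬(x = i ∧ y = j) := fun ⟨h1, h2⟩ => hc (by rw [h1, h2]; omega)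
      simp [hc, hne]
  rw [key, Finset.card_insert_of_notMem]
  simp only [mem_filter, mem_univ, true_and, Fin.lt_def, not_and]
  intro _
  omega

theorem stmt_18 (n : ℕ) (hn : 3 ≤ n) (i j : Fin n) (hij : (j : ℕ) = (i : ℕ) + 1) :
    ∑ σ ∈ Finset.univ.filter
        (fun σ : Equiv.Perm (Fin n) => ((σ⁻¹ j : Fin n) : ℕ) = ((σ⁻¹ i : Fin n) : ℕ) + 1),
      (desCount σ⁻¹ : ℤ) =
    (∑ σ ∈ Finset.univ.filter
        (fun σ : Equiv.Perm (Fin n) => ((σ⁻¹ i : Fin n) : ℕ) = ((σ⁻¹ j : Fin n) : ℕ) + 1),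
      (desCount σ⁻¹ : ℤ)) - ((n - 2).factorial : ℤ) * ((n : ℤ) - 1) := by
  have hinv : ∀ σ : Perm (Fin n), (Equiv.swap i j * σ)⁻¹ = σ⁻¹ * Equiv.swap i j := by
    intro σ
    rw [mul_inv_rev, Equiv.swap_inv]
  have hmem : ∀ σ : Perm (Fin n),
      ((σ⁻¹ j : Fin n) : ℕ) = ((σ⁻¹ i : Fin n) : ℕ) + 1 →
      (((Equiv.swap i j * σ)⁻¹ i : Fin n) : ℕ) = (((Equiv.swap i j * σ)⁻¹ j : Fin n) : ℕ) + 1 := by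
    intro σ h
    rw [hinv]
    simp only [Equiv.Perm.mul_apply, Equiv.swap_apply_left, Equiv.swap_apply_right]
    exact h
  have hbij : ∑ σ ∈ Finset.univ.filter
        (fun σ : Perm (Fin n) => ((σ⁻¹ i : Fin n) : ℕ) = ((σ⁻¹ j : Fin n) : ℕ) + 1),
      (desCount σ⁻¹ : ℤ)
      = ∑ σ ∈ Finset.univ.filter
        (fun σ : Perm (Fin n) => ((σ⁻¹ j : Fin n) : ℕ) = ((σ⁻¹ i : Fin n) : ℕ) + 1),
      ((desCount σ⁻¹ : ℤ) + 1) := by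
    refine (Finset.sum_nbij' (fun σ => Equiv.swap i j * σ) (fun σ => Equiv.swap i j * σ)
      ?_ ?_ ?_ ?_ ?_).symm
    · intro σ hσ
      simp only [mem_filter, mem_univ, true_and] at *
      exact hmem σ hσ
    · intro σ hσ
      simp only [mem_filter, mem_univ, true_and] at *
      rw [hinv]
      simp only [Equiv.Perm.mul_apply, Equiv.swap_apply_left, Equiv.swap_apply_right]
      exact hσ
    · intro σ _; simp [← mul_assoc]
    · intro σ _; simp [← mul_assoc]
    · intro σ hσ
      simp only [mem_filter, mem_univ, true_and] at hσ
      rw [hinv]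
      have := des_aux n i j hij σ⁻¹ hσ
      rw [this]
      push_cast
      ring
  rw [hbij, Finset.sum_add_distrib, Finset.sum_const, nsmul_eq_mul, mul_one,
    countA n (by omega) i j hij]
  have : (((n - 1) * (n - 2).factorial : ℕ) : ℤ) = ((n - 2).factorial : ℤ) * ((n : ℤ) - 1) := by
    push_cast [Nat.cast_sub (by omega : 1 ≤ n)]
    ring
  rw [this]
  ring
end

section
/- Let n ≥ 3 and let i < j with j > i+1 be in {1,…,n}. Then Σ_{σ : σ⁻¹(j) = σ⁻¹(i)+1} des(σ⁻¹) = Σ_{σ : σ⁻¹(i) = σ⁻¹(j)+1} des(σ⁻¹), where both sums run over permutations σ ∈ S_n. -/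
lemma key_cmp {n : ℕ} (π : Equiv.Perm (Fin n)) (i j : Fin n) (hij : (i : ℕ) + 1 < (j : ℕ))
    (h : ((π j : Fin n) : ℕ) = ((π i : Fin n) : ℕ) + 1) (a b : Fin n)
    (hb : (b : ℕ) = (a : ℕ) + 1) :
    (π (Equiv.swap i j b) < π (Equiv.swap i j a) ↔ π b < π a) := by
  have inj : ∀ x y : Fin n, x ≠ y → ((π x : Fin n) : ℕ) ≠ ((π y : Fin n) : ℕ) := by
    intro x y hxy e
    exact hxy (π.injective (Fin.val_injective e))
  have vne : ∀ x y : Fin n, (x : ℕ) ≠ (y : ℕ) → x ≠ y := by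
    intro x y hxy e; exact hxy (by rw [e])
  rcases eq_or_ne a i with ha | hai
  · have hva : (a : ℕ) = i := by rw [ha]
    have hbi : b ≠ i := vne _ _ (by omega)
    have hbj : b ≠ j := vne _ _ (by omega)
    rw [ha, Equiv.swap_apply_left, Equiv.swap_apply_of_ne_of_ne hbi hbj]
    have h1 := inj b i hbi
    simp only [Fin.lt_def]
    omega
  · rcases eq_or_ne a j with ha | haj
    · have hva : (a : ℕ) = j := by rw [ha]
      have hbi : b ≠ i := vne _ _ (by omega)
      have hbj : b ≠ j := vne _ _ (by omega)
      rw [ha, Equiv.swap_apply_right, Equiv.swap_apply_of_ne_of_ne hbi hbj]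
      have h1 := inj b i hbi
      simp only [Fin.lt_def]
      omega
    · rcases eq_or_ne b i with hbb | hbi
      · have hvb : (b : ℕ) = i := by rw [hbb]
        rw [hbb, Equiv.swap_apply_left, Equiv.swap_apply_of_ne_of_ne hai haj]
        have h1 := inj a j haj
        simp only [Fin.lt_def]
        omega
      · rcases eq_or_ne b j with hbb | hbj
        · have hvb : (b : ℕ) = j := by rw [hbb]
          rw [hbb, Equiv.swap_apply_right, Equiv.swap_apply_of_ne_of_ne hai haj]
          have h1 := inj a j haj
          simp only [Fin.lt_def]
          omega
        · rw [Equiv.swap_apply_of_ne_of_ne hai haj, Equiv.swap_apply_of_ne_of_ne hbi hbj]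

lemma des_swap {n : ℕ} (σ : Equiv.Perm (Fin n)) (i j : Fin n) (hij : (i : ℕ) + 1 < (j : ℕ))
    (h : ((σ⁻¹ j : Fin n) : ℕ) = ((σ⁻¹ i : Fin n) : ℕ) + 1) :
    desCount (Equiv.swap i j * σ)⁻¹ = desCount σ⁻¹ := by
  unfold desCount
  congr 1
  apply Finset.filter_congr
  intro p _
  have happ : ∀ x : Fin n, (Equiv.swap i j * σ)⁻¹ x = σ⁻¹ (Equiv.swap i j x) := by
    intro x
    simp [mul_inv_rev, Equiv.Perm.mul_apply]
  rw [happ, happ]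
  constructor
  · rintro ⟨h1, h2⟩
    exact ⟨h1, (key_cmp σ⁻¹ i j hij h p.1 p.2 h1).mp h2⟩
  · rintro ⟨h1, h2⟩
    exact ⟨h1, (key_cmp σ⁻¹ i j hij h p.1 p.2 h1).mpr h2⟩

theorem stmt_19 (n : ℕ) (hn : 3 ≤ n) (i j : Fin n) (hij : (i : ℕ) + 1 < (j : ℕ)) :
    ∑ σ ∈ Finset.univ.filter
        (fun σ : Equiv.Perm (Fin n) => ((σ⁻¹ j : Fin n) : ℕ) = ((σ⁻¹ i : Fin n) : ℕ) + 1),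
      desCount σ⁻¹ =
    ∑ σ ∈ Finset.univ.filter
        (fun σ : Equiv.Perm (Fin n) => ((σ⁻¹ i : Fin n) : ℕ) = ((σ⁻¹ j : Fin n) : ℕ) + 1),
      desCount σ⁻¹ := by
  have hinv : ∀ σ : Equiv.Perm (Fin n), ∀ x, (Equiv.swap i j * σ)⁻¹ x = σ⁻¹ (Equiv.swap i j x) := by
    intro σ x
    simp [mul_inv_rev, Equiv.Perm.mul_apply]
  apply Finset.sum_nbij' (fun σ => Equiv.swap i j * σ) (fun σ => Equiv.swap i j * σ)
  · intro σ hσ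
    simp only [Finset.mem_filter, Finset.mem_univ, true_and] at hσ ⊢
    rw [hinv, hinv, Equiv.swap_apply_left, Equiv.swap_apply_right]
    omega
  · intro σ hσ
    simp only [Finset.mem_filter, Finset.mem_univ, true_and] at hσ ⊢
    rw [hinv, hinv, Equiv.swap_apply_left, Equiv.swap_apply_right]
    omega
  · intro σ _
    rw [← mul_assoc, Equiv.swap_mul_self, one_mul]
  · intro σ _
    rw [← mul_assoc, Equiv.swap_mul_self, one_mul]
  · intro σ hσ
    simp only [Finset.mem_filter, Finset.mem_univ, true_and] at hσ
    exact (des_swap σ i j hij hσ).symm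
end
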